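/- Let δ > 0, 2 < m < 3, t₀ > 0, and let g : [0, t₀] → ℝ be continuously differentiable with g ≥ 0, g(0) = 0, and (m−1) g′(t) ≤ g(t)^{3−m} for all t ∈ [0, t₀]. Then e^{−(m−1)δ t₀} g(t₀)^{m−1} ≤ ∫₀^{t₀} e^{−δτ} g(τ) dτ. -/

import Mathlib

open Set Filter

/-- if `g ≥ 0` is `C¹` on `[0, t₀]` with `g(0) = 0` and
`(m−1) g′ ≤ g^{3−m}` (with `2 < m < 3`), then
`e^{−(m−1)δt₀} g(t₀)^{m−1} ≤ ∫₀^{t₀} e^{−δτ} g(τ) dτ` for every `δ > 0`. -/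
theorem power_le_integral_of_deriv_le (δ : ℝ) (hδ : 0 < δ)
    (m : ℝ) (hm2 : 2 < m) (hm3 : m < 3)
    (t₀ : ℝ) (ht₀ : 0 < t₀)
    (g g' : ℝ → ℝ)
    (hderiv : ∀ t ∈ Set.Icc 0 t₀, HasDerivWithinAt g (g' t) (Set.Icc 0 t₀) t)
    (hcont : ContinuousOn g' (Set.Icc 0 t₀))
    (hnonneg : ∀ t ∈ Set.Icc 0 t₀, 0 ≤ g t)
    (hzero : g 0 = 0)
    (hineq : ∀ t ∈ Set.Icc 0 t₀, (m - 1) * g' t ≤ g t ^ (3 - m)) :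
    Real.exp (-(m - 1) * δ * t₀) * g t₀ ^ (m - 1)
      ≤ ∫ τ in (0 : ℝ)..t₀, Real.exp (-δ * τ) * g τ := by
  have hgcont : ContinuousOn g (Set.Icc 0 t₀) := fun t ht => (hderiv t ht).continuousWithinAt
  set F : ℝ → ℝ := fun t => Real.exp (-(m - 1) * δ * t) * g t ^ (m - 1) with hF
  set E : ℝ → ℝ := fun t =>
      Real.exp (-(m - 1) * δ * t) * (-(m - 1) * δ) * g t ^ (m - 1)
      + Real.exp (-(m - 1) * δ * t) * ((m - 1) * g t ^ (m - 1 - 1) * g' t) with hE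
  have hexp : ∀ t : ℝ, HasDerivAt (fun t : ℝ => Real.exp (-(m - 1) * δ * t))
      (Real.exp (-(m - 1) * δ * t) * (-(m - 1) * δ)) t := by
    intro t
    have := ((hasDerivAt_id t).const_mul (-(m - 1) * δ)).exp
    simpa [mul_comm] using this
  have hFderiv : ∀ t ∈ Set.Icc 0 t₀, HasDerivWithinAt F (E t) (Set.Icc 0 t₀) t := by
    intro t ht
    have h2 : HasDerivWithinAt (fun t => g t ^ (m - 1))
        ((m - 1) * g t ^ (m - 1 - 1) * g' t) (Set.Icc 0 t₀) t := by
      have hp : HasDerivAt (fun x : ℝ => x ^ (m - 1)) ((m - 1) * g t ^ (m - 1 - 1)) (g t) :=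
        Real.hasDerivAt_rpow_const (Or.inr (by linarith))
      simpa [mul_assoc, Function.comp_def] using hp.comp_hasDerivWithinAt t (hderiv t ht)
    exact ((hexp t).hasDerivWithinAt).mul h2
  have hbound : ∀ t ∈ Set.Icc 0 t₀, E t ≤ Real.exp (-δ * t) * g t := by
    intro t ht
    have hg0 := hnonneg t ht
    have ht0 : 0 ≤ t := ht.1
    have hexp1 : (0 : ℝ) < Real.exp (-(m - 1) * δ * t) := Real.exp_pos _
    have hterm1 : Real.exp (-(m - 1) * δ * t) * (-(m - 1) * δ) * g t ^ (m - 1) ≤ 0 := by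
      apply mul_nonpos_of_nonpos_of_nonneg
      · exact mul_nonpos_of_nonneg_of_nonpos hexp1.le (by nlinarith)
      · exact Real.rpow_nonneg hg0 _
    have hA : (m - 1) * g t ^ (m - 1 - 1) * g' t ≤ g t := by
      have h1 : g t ^ (m - 1 - 1) * ((m - 1) * g' t) ≤ g t ^ (m - 1 - 1) * g t ^ (3 - m) :=
        mul_le_mul_of_nonneg_left (hineq t ht) (Real.rpow_nonneg hg0 _)
      have he : (m - 1 - 1) + (3 - m) = 1 := by ring
      have h2 : g t ^ (m - 1 - 1) * g t ^ (3 - m) = g t := by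
        rw [← Real.rpow_add' hg0 (by rw [he]; norm_num), he, Real.rpow_one]
      calc (m - 1) * g t ^ (m - 1 - 1) * g' t
          = g t ^ (m - 1 - 1) * ((m - 1) * g' t) := by ring
        _ ≤ g t ^ (m - 1 - 1) * g t ^ (3 - m) := h1
        _ = g t := h2
    have hexp2 : Real.exp (-(m - 1) * δ * t) ≤ Real.exp (-δ * t) := by
      apply Real.exp_le_exp.2
      nlinarith [mul_nonneg (mul_nonneg (by linarith : (0:ℝ) ≤ m - 2) hδ.le) ht0]
    have hterm2 : Real.exp (-(m - 1) * δ * t) * ((m - 1) * g t ^ (m - 1 - 1) * g' t)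
        ≤ Real.exp (-δ * t) * g t := by
      rcases le_or_gt ((m - 1) * g t ^ (m - 1 - 1) * g' t) 0 with h | h
      · exact (mul_nonpos_of_nonneg_of_nonpos hexp1.le h).trans
          (mul_nonneg (Real.exp_pos _).le hg0)
      · calc Real.exp (-(m - 1) * δ * t) * ((m - 1) * g t ^ (m - 1 - 1) * g' t)
            ≤ Real.exp (-δ * t) * ((m - 1) * g t ^ (m - 1 - 1) * g' t) :=
              mul_le_mul_of_nonneg_right hexp2 h.le
          _ ≤ Real.exp (-δ * t) * g t :=
              mul_le_mul_of_nonneg_left hA (Real.exp_pos _).le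
    calc E t = Real.exp (-(m - 1) * δ * t) * (-(m - 1) * δ) * g t ^ (m - 1)
          + Real.exp (-(m - 1) * δ * t) * ((m - 1) * g t ^ (m - 1 - 1) * g' t) := rfl
      _ ≤ 0 + Real.exp (-δ * t) * g t := add_le_add hterm1 hterm2
      _ = Real.exp (-δ * t) * g t := by ring
  have hexpcont : ContinuousOn (fun t : ℝ => Real.exp (-(m - 1) * δ * t)) (Set.Icc 0 t₀) := by
    fun_prop
  have hpowcont : ContinuousOn (fun t => g t ^ (m - 1)) (Set.Icc 0 t₀) :=
    hgcont.rpow_const (fun t ht => Or.inr (by linarith))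
  have hpowcont' : ContinuousOn (fun t => g t ^ (m - 1 - 1)) (Set.Icc 0 t₀) :=
    hgcont.rpow_const (fun t ht => Or.inr (by linarith))
  have hEcont : ContinuousOn E (Set.Icc 0 t₀) := by
    apply ContinuousOn.add
    · exact (hexpcont.mul continuousOn_const).mul hpowcont
    · exact hexpcont.mul ((continuousOn_const.mul hpowcont').mul hcont)
  have hFcont : ContinuousOn F (Set.Icc 0 t₀) := hexpcont.mul hpowcont
  have huIcc : Set.uIcc (0 : ℝ) t₀ = Set.Icc 0 t₀ := Set.uIcc_of_le ht₀.le
  have hEint : IntervalIntegrable E MeasureTheory.volume 0 t₀ := by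
    apply ContinuousOn.intervalIntegrable
    rwa [huIcc]
  have hRcont : ContinuousOn (fun τ : ℝ => Real.exp (-δ * τ) * g τ) (Set.Icc 0 t₀) := by
    exact (by fun_prop : ContinuousOn (fun τ : ℝ => Real.exp (-δ * τ)) (Set.Icc 0 t₀)).mul hgcont
  have hRint : IntervalIntegrable (fun τ : ℝ => Real.exp (-δ * τ) * g τ)
      MeasureTheory.volume 0 t₀ := by
    apply ContinuousOn.intervalIntegrable
    rwa [huIcc]
  have key : ∫ t in (0 : ℝ)..t₀, E t = F t₀ - F 0 := by
    apply intervalIntegral.integral_eq_sub_of_hasDeriv_right_of_le ht₀.le hFcont ?_ hEint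
    intro x hx
    have hx' : x ∈ Set.Icc 0 t₀ := ⟨hx.1.le, hx.2.le⟩
    exact ((hFderiv x hx').hasDerivAt (Icc_mem_nhds hx.1 hx.2)).hasDerivWithinAt
  have hF0 : F 0 = 0 := by
    simp [hF, hzero, Real.zero_rpow (by intro h; nlinarith : m - 1 ≠ 0)]
  have hmono : ∫ t in (0 : ℝ)..t₀, E t ≤ ∫ τ in (0 : ℝ)..t₀, Real.exp (-δ * τ) * g τ :=
    intervalIntegral.integral_mono_on ht₀.le hEint hRint hbound
  have hfin : F t₀ - F 0 ≤ ∫ τ in (0 : ℝ)..t₀, Real.exp (-δ * τ) * g τ := key ▸ hmono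
  rw [hF0, sub_zero] at hfin
  exact hfin
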